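/- System (4.1) is dissipative: fix φ ∈ (0, μ] and set ρ = c₁K₁(r₁ + φ)²/(4r₁) + c₂K₂(r₂ + φ)²/(4r₂). Then every solution (x(t), y(t), z(t)) of (4.1) defined for all t ≥ 0 with nonnegative coordinates satisfies limsup_{t→∞} (c₁·x(t) + c₂·y(t) + z(t)) ≤ ρ/φ. In particular, there is a compact subset C of [0,∞)³ such that every nonnegative solution eventually enters and remains in C. -/

import Mathlib

open Filter

/-- A nonnegative solution of system (4.1). -/
def IsNonnegSol41 (r₁ r₂ K₁ K₂ q₁ q₂ a₁ a₂ c₁ c₂ μ m α₁₂ α₂₁ : ℝ)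
    (x y z : ℝ → ℝ) : Prop :=
  (∀ t ≥ (0:ℝ), 0 ≤ x t ∧ 0 ≤ y t ∧ 0 ≤ z t) ∧
  (∀ t ≥ (0:ℝ), HasDerivAt x
    (x t * (r₁ * (1 - x t / K₁) - α₁₂ * y t - q₁ * z t / (1 + a₁ * x t))) t) ∧
  (∀ t ≥ (0:ℝ), HasDerivAt y
    (y t * (r₂ * (1 - y t / K₂) - α₂₁ * x t - q₂ * z t / (1 + a₂ * y t))) t) ∧
  (∀ t ≥ (0:ℝ), HasDerivAt z
    (z t * (c₁ * q₁ * x t / (1 + a₁ * x t)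
      + c₂ * q₂ * y t / (1 + a₂ * y t) - μ - m * z t)) t)

/-- Peak of the logistic-type quadratic. -/
lemma quadBound41 (r K φ s : ℝ) (hr : 0 < r) (hK : 0 < K) :
    s * (r + φ) - r * s ^ 2 / K ≤ K * (r + φ) ^ 2 / (4 * r) := by
  have h4 : (0:ℝ) < 4 * r * K := by positivity
  have e : s * (r + φ) - r * s ^ 2 / K
      = (4 * r * K * s * (r + φ) - 4 * r ^ 2 * s ^ 2) / (4 * r * K) := by
    field_simp
  rw [e, div_le_div_iff₀ h4 (by positivity : (0:ℝ) < 4 * r)]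
  nlinarith [mul_nonneg hK.le (sq_nonneg (2 * r * s - K * (r + φ))),
    sq_nonneg (2 * r * s - K * (r + φ)), hr.le, hK.le]

/-- Grönwall-type pointwise bound for nonnegative solutions of (4.1). -/
lemma gronwall41
    (r₁ r₂ K₁ K₂ q₁ q₂ a₁ a₂ c₁ c₂ μ m α₁₂ α₂₁ : ℝ)
    (hr₁ : 0 < r₁) (hr₂ : 0 < r₂) (hK₁ : 0 < K₁) (hK₂ : 0 < K₂)
    (hc₁ : 0 < c₁) (hc₂ : 0 < c₂) (hm : 0 < m)
    (hα₁₂ : 0 ≤ α₁₂) (hα₂₁ : 0 ≤ α₂₁)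
    (φ : ℝ) (hφ₁ : 0 < φ) (hφ₂ : φ ≤ μ)
    (ρ : ℝ)
    (hρ : ρ = c₁ * K₁ * (r₁ + φ) ^ 2 / (4 * r₁)
      + c₂ * K₂ * (r₂ + φ) ^ 2 / (4 * r₂))
    (x y z : ℝ → ℝ)
    (hsol : IsNonnegSol41 r₁ r₂ K₁ K₂ q₁ q₂ a₁ a₂ c₁ c₂ μ m α₁₂ α₂₁ x y z) :
    ∀ t ≥ (0:ℝ), c₁ * x t + c₂ * y t + z t
      ≤ ρ / φ + (c₁ * x 0 + c₂ * y 0 + z 0 - ρ / φ) * Real.exp (-(φ * t)) := by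
  obtain ⟨hpos, hx, hy, hz⟩ := hsol
  set W : ℝ → ℝ := fun t => c₁ * x t + c₂ * y t + z t with hWdef
  set D : ℝ → ℝ := fun t =>
    c₁ * (x t * (r₁ * (1 - x t / K₁) - α₁₂ * y t - q₁ * z t / (1 + a₁ * x t)))
    + c₂ * (y t * (r₂ * (1 - y t / K₂) - α₂₁ * x t - q₂ * z t / (1 + a₂ * y t)))
    + z t * (c₁ * q₁ * x t / (1 + a₁ * x t)
      + c₂ * q₂ * y t / (1 + a₂ * y t) - μ - m * z t) with hDdef
  have hW : ∀ t ≥ (0:ℝ), HasDerivAt W (D t) t := fun t ht =>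
    (((hx t ht).const_mul c₁).add ((hy t ht).const_mul c₂)).add (hz t ht)
  -- key differential inequality
  have hkey : ∀ t ≥ (0:ℝ), D t + φ * W t ≤ ρ := by
    intro t ht
    obtain ⟨hxt, hyt, hzt⟩ := hpos t ht
    have e : D t + φ * W t
        = c₁ * (x t * (r₁ + φ) - r₁ * x t ^ 2 / K₁)
          + c₂ * (y t * (r₂ + φ) - r₂ * y t ^ 2 / K₂)
          - c₁ * α₁₂ * x t * y t - c₂ * α₂₁ * x t * y t
          + (φ - μ) * z t - m * z t ^ 2 := by
      simp only [hDdef, hWdef]; ring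
    rw [e, hρ]
    have h1 : c₁ * (x t * (r₁ + φ) - r₁ * x t ^ 2 / K₁)
        ≤ c₁ * K₁ * (r₁ + φ) ^ 2 / (4 * r₁) :=
      calc c₁ * (x t * (r₁ + φ) - r₁ * x t ^ 2 / K₁)
          ≤ c₁ * (K₁ * (r₁ + φ) ^ 2 / (4 * r₁)) :=
            mul_le_mul_of_nonneg_left (quadBound41 r₁ K₁ φ (x t) hr₁ hK₁) hc₁.le
        _ = c₁ * K₁ * (r₁ + φ) ^ 2 / (4 * r₁) := by ring
    have h2 : c₂ * (y t * (r₂ + φ) - r₂ * y t ^ 2 / K₂)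
        ≤ c₂ * K₂ * (r₂ + φ) ^ 2 / (4 * r₂) :=
      calc c₂ * (y t * (r₂ + φ) - r₂ * y t ^ 2 / K₂)
          ≤ c₂ * (K₂ * (r₂ + φ) ^ 2 / (4 * r₂)) :=
            mul_le_mul_of_nonneg_left (quadBound41 r₂ K₂ φ (y t) hr₂ hK₂) hc₂.le
        _ = c₂ * K₂ * (r₂ + φ) ^ 2 / (4 * r₂) := by ring
    have h3 : (0:ℝ) ≤ c₁ * α₁₂ * x t * y t := by positivity
    have h4 : (0:ℝ) ≤ c₂ * α₂₁ * x t * y t := by positivity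
    have h5 : (φ - μ) * z t ≤ 0 := mul_nonpos_of_nonpos_of_nonneg (by linarith) hzt
    have h6 : (0:ℝ) ≤ m * z t ^ 2 := by positivity
    linarith
  -- the auxiliary function  f t = e^{φ t} (W t - ρ/φ)  is antitone on [0,∞)
  set f : ℝ → ℝ := fun t => Real.exp (φ * t) * (W t - ρ / φ) with hfdef
  have hf : ∀ t ≥ (0:ℝ), HasDerivAt f (Real.exp (φ * t) * (D t + φ * W t - ρ)) t := by
    intro t ht
    have he : HasDerivAt (fun s : ℝ => Real.exp (φ * s)) (Real.exp (φ * t) * φ) t := by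
      simpa using ((hasDerivAt_id t).const_mul φ).exp
    have := he.mul ((hW t ht).sub_const (ρ / φ))
    refine this.congr_deriv ?_
    have hφ0 : φ ≠ 0 := ne_of_gt hφ₁
    have hc : φ * (ρ / φ) = ρ := mul_div_cancel₀ ρ hφ0
    linear_combination (-Real.exp (φ * t)) * hc
  have hanti : AntitoneOn f (Set.Ici (0:ℝ)) := by
    apply antitoneOn_of_deriv_nonpos (convex_Ici 0)
    · intro t ht
      exact (hf t ht).continuousAt.continuousWithinAt
    · intro t ht
      rw [interior_Ici] at ht
      exact (hf t (le_of_lt ht)).differentiableAt.differentiableWithinAt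
    · intro t ht
      rw [interior_Ici] at ht
      rw [(hf t (le_of_lt ht)).deriv]
      have := hkey t (le_of_lt ht)
      have he : (0:ℝ) < Real.exp (φ * t) := Real.exp_pos _
      nlinarith
  intro t ht
  have h0 : f t ≤ f 0 := hanti (Set.self_mem_Ici) ht ht
  have hE : (0:ℝ) < Real.exp (φ * t) := Real.exp_pos _
  have hf0 : f 0 = c₁ * x 0 + c₂ * y 0 + z 0 - ρ / φ := by
    simp [hfdef, hWdef]
  have hft : f t = Real.exp (φ * t) * (c₁ * x t + c₂ * y t + z t - ρ / φ) := rfl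
  rw [hft, hf0] at h0
  have key : c₁ * x t + c₂ * y t + z t - ρ / φ
      ≤ (c₁ * x 0 + c₂ * y 0 + z 0 - ρ / φ) / Real.exp (φ * t) := by
    rw [le_div_iff₀ hE, mul_comm]; exact h0
  rw [Real.exp_neg, ← div_eq_mul_inv]
  linarith

/-- Dissipativity of system (4.1). -/
theorem statement13
    (r₁ r₂ K₁ K₂ q₁ q₂ a₁ a₂ c₁ c₂ μ m α₁₂ α₂₁ : ℝ)
    (hr₁ : 0 < r₁) (hr₂ : 0 < r₂) (hK₁ : 0 < K₁) (hK₂ : 0 < K₂)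
    (hq₁ : 0 < q₁) (hq₂ : 0 < q₂) (ha₁ : 0 < a₁) (ha₂ : 0 < a₂)
    (hc₁ : 0 < c₁) (hc₂ : 0 < c₂) (hμ : 0 < μ) (hm : 0 < m)
    (hα₁₂ : 0 ≤ α₁₂) (hα₂₁ : 0 ≤ α₂₁)
    (φ : ℝ) (hφ₁ : 0 < φ) (hφ₂ : φ ≤ μ)
    (ρ : ℝ)
    (hρ : ρ = c₁ * K₁ * (r₁ + φ) ^ 2 / (4 * r₁)
      + c₂ * K₂ * (r₂ + φ) ^ 2 / (4 * r₂)) :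
    (∀ x y z : ℝ → ℝ,
      IsNonnegSol41 r₁ r₂ K₁ K₂ q₁ q₂ a₁ a₂ c₁ c₂ μ m α₁₂ α₂₁ x y z →
      Filter.limsup (fun t => c₁ * x t + c₂ * y t + z t) atTop ≤ ρ / φ) ∧
    ∃ C : Set (ℝ × ℝ × ℝ), IsCompact C ∧
      C ⊆ {p : ℝ × ℝ × ℝ | 0 ≤ p.1 ∧ 0 ≤ p.2.1 ∧ 0 ≤ p.2.2} ∧
      ∀ x y z : ℝ → ℝ,
        IsNonnegSol41 r₁ r₂ K₁ K₂ q₁ q₂ a₁ a₂ c₁ c₂ μ m α₁₂ α₂₁ x y z →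
        ∃ T > (0:ℝ), ∀ t ≥ T, (x t, y t, z t) ∈ C := by
  -- convergence of the exponential tail
  have hexp : Tendsto (fun t : ℝ => Real.exp (-(φ * t))) atTop (nhds 0) := by
    have h1 : Tendsto (fun t : ℝ => -(φ * t)) atTop atBot := by
      have h2 : Tendsto (fun t : ℝ => φ * t) atTop atTop := by
        simpa using tendsto_id.const_mul_atTop (l := atTop) hφ₁
      exact tendsto_neg_atTop_atBot.comp h2
    exact Real.tendsto_exp_atBot.comp h1
  -- eventual bound for any solution and any ε > 0
  have hev : ∀ x y z : ℝ → ℝ,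
      IsNonnegSol41 r₁ r₂ K₁ K₂ q₁ q₂ a₁ a₂ c₁ c₂ μ m α₁₂ α₂₁ x y z →
      ∀ ε > (0:ℝ), ∀ᶠ t in atTop, c₁ * x t + c₂ * y t + z t ≤ ρ / φ + ε := by
    intro x y z hsol ε hε
    have hG := gronwall41 r₁ r₂ K₁ K₂ q₁ q₂ a₁ a₂ c₁ c₂ μ m α₁₂ α₂₁
      hr₁ hr₂ hK₁ hK₂ hc₁ hc₂ hm hα₁₂ hα₂₁ φ hφ₁ hφ₂ ρ hρ x y z hsol
    have htail : Tendsto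
        (fun t : ℝ => (c₁ * x 0 + c₂ * y 0 + z 0 - ρ / φ) * Real.exp (-(φ * t)))
        atTop (nhds 0) := by
      simpa using hexp.const_mul (c₁ * x 0 + c₂ * y 0 + z 0 - ρ / φ)
    have hsmall : ∀ᶠ t in atTop,
        (c₁ * x 0 + c₂ * y 0 + z 0 - ρ / φ) * Real.exp (-(φ * t)) ≤ ε :=
      htail.eventually (eventually_le_nhds (by linarith : (0:ℝ) < ε))
    filter_upwards [hsmall, eventually_ge_atTop (0:ℝ)] with t h1 h2
    have h3 := hG t h2
    linarith
  have hlimsup : ∀ x y z : ℝ → ℝ,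
      IsNonnegSol41 r₁ r₂ K₁ K₂ q₁ q₂ a₁ a₂ c₁ c₂ μ m α₁₂ α₂₁ x y z →
      Filter.limsup (fun t => c₁ * x t + c₂ * y t + z t) atTop ≤ ρ / φ := by
    intro x y z hsol
    have hcb : IsCoboundedUnder (· ≤ ·) atTop (fun t => c₁ * x t + c₂ * y t + z t) := by
      apply isCoboundedUnder_le_of_eventually_le (x := 0) atTop
      filter_upwards [eventually_ge_atTop (0:ℝ)] with t ht
      obtain ⟨h1, h2, h3⟩ := hsol.1 t ht
      positivity
    refine le_of_forall_pos_le_add (fun ε hε => ?_)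
    exact limsup_le_of_le hcb (hev x y z hsol ε hε)
  refine ⟨hlimsup, ?_⟩
  -- the compact absorbing set
  have hρpos : 0 < ρ := by
    rw [hρ]; positivity
  have hrf : 0 < ρ / φ + 1 := by positivity
  set M : ℝ := (ρ / φ + 1) / c₁ + (ρ / φ + 1) / c₂ + (ρ / φ + 1) with hM
  refine ⟨{p : ℝ × ℝ × ℝ | 0 ≤ p.1 ∧ 0 ≤ p.2.1 ∧ 0 ≤ p.2.2 ∧
      c₁ * p.1 + c₂ * p.2.1 + p.2.2 ≤ ρ / φ + 1}, ?_, ?_, ?_⟩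
  · -- compactness: closed and contained in a box
    have hclosed : IsClosed {p : ℝ × ℝ × ℝ | 0 ≤ p.1 ∧ 0 ≤ p.2.1 ∧ 0 ≤ p.2.2 ∧
        c₁ * p.1 + c₂ * p.2.1 + p.2.2 ≤ ρ / φ + 1} := by
      apply IsClosed.inter (isClosed_le continuous_const continuous_fst)
      apply IsClosed.inter (isClosed_le continuous_const (continuous_fst.comp continuous_snd))
      apply IsClosed.inter (isClosed_le continuous_const (continuous_snd.comp continuous_snd))
      exact isClosed_le (((continuous_const.mul continuous_fst).add
        (continuous_const.mul (continuous_fst.comp continuous_snd))).add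
        (continuous_snd.comp continuous_snd)) continuous_const
    refine IsCompact.of_isClosed_subset
      ((isCompact_Icc (a := (0:ℝ)) (b := M)).prod
        ((isCompact_Icc (a := (0:ℝ)) (b := M)).prod (isCompact_Icc (a := (0:ℝ)) (b := M))))
      hclosed ?_
    rintro ⟨p1, p2, p3⟩ ⟨h1, h2, h3, h4⟩
    have b1 : p1 ≤ (ρ / φ + 1) / c₁ := by
      rw [le_div_iff₀ hc₁]; nlinarith
    have b2 : p2 ≤ (ρ / φ + 1) / c₂ := by
      rw [le_div_iff₀ hc₂]; nlinarith
    have b3 : p3 ≤ ρ / φ + 1 := by nlinarith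
    have h1' : (0:ℝ) ≤ (ρ / φ + 1) / c₁ := by positivity
    have h2' : (0:ℝ) ≤ (ρ / φ + 1) / c₂ := by positivity
    exact ⟨⟨h1, by simp only [hM]; linarith⟩, ⟨h2, by simp only [hM]; linarith⟩,
      ⟨h3, by simp only [hM]; linarith⟩⟩
  · rintro ⟨p1, p2, p3⟩ ⟨h1, h2, h3, _⟩
    exact ⟨h1, h2, h3⟩
  · intro x y z hsol
    have := hev x y z hsol 1 one_pos
    rw [eventually_atTop] at this
    obtain ⟨T₀, hT₀⟩ := this
    refine ⟨max T₀ 1, lt_of_lt_of_le one_pos (le_max_right _ _), fun t ht => ?_⟩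
    have ht0 : (0:ℝ) ≤ t := le_trans (by linarith [le_max_right T₀ (1:ℝ)]) ht
    obtain ⟨h1, h2, h3⟩ := hsol.1 t ht0
    exact ⟨h1, h2, h3, hT₀ t (le_trans (le_max_left _ _) ht)⟩
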